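/- There exists a constant C > 0 such that, for every n ≥ 2 (with 0 < 2r_n < n), one has Σ_{j=1}^{n} |α^n_j| ≤ C · n·ln(n)/r_n, and moreover Σ_{j=1+⌊n/r_n⌋}^{n−⌊n/r_n⌋−1} |1/β^n_j − 1| ≤ C · n·ln(n)/r_n. -/

import Mathlib

open MeasureTheory ProbabilityTheory Real Filter Topology

noncomputable section

/-- The eigenvalues `α^n_j` of the interaction Hamiltonian. -/
def alpha (n r j : ℕ) : ℝ :=
  (1 / (r : ℝ)) * ∑ m ∈ Finset.Icc 1 r, Real.cos (2 * j * m * π / n)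

/-- `β^n_j = 1 - α^n_j`. -/
def beta (n r j : ℕ) : ℝ := 1 - alpha n r j

private lemma dirichlet (x : ℝ) (hs : Real.sin x ≠ 0) (r : ℕ) :
    |∑ m ∈ Finset.Icc 1 r, Real.cos (2 * m * x)| ≤ 1 / |Real.sin x| := by
  have key : 2 * Real.sin x * ∑ m ∈ Finset.Icc 1 r, Real.cos (2 * m * x)
      = Real.sin ((2 * r + 1) * x) - Real.sin x := by
    have hIcc : Finset.Icc 1 r = Finset.Ico 1 (r + 1) := by
      rw [Finset.Ico_add_one_right_eq_Icc]
    rw [hIcc, Finset.sum_Ico_eq_sum_range, Finset.mul_sum]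
    simp only [Nat.add_sub_cancel]
    have hcg : ∀ i ∈ Finset.range r, 2 * Real.sin x * Real.cos (2 * (↑(1 + i) : ℝ) * x)
        = (fun i : ℕ => Real.sin ((2 * i + 1) * x)) (i + 1)
          - (fun i : ℕ => Real.sin ((2 * i + 1) * x)) i := by
      intro i _
      simp only []
      have h := Real.sin_sub_sin ((2 * ((i:ℝ) + 1) + 1) * x) ((2 * i + 1) * x)
      rw [show ((2 * ((i:ℝ) + 1) + 1) * x - (2 * (i:ℝ) + 1) * x) / 2 = x by ring,
          show ((2 * ((i:ℝ) + 1) + 1) * x + (2 * (i:ℝ) + 1) * x) / 2 = 2 * (1 + (i:ℝ)) * x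
            by ring] at h
      push_cast
      linarith [h]
    rw [Finset.sum_congr rfl hcg, Finset.sum_range_sub (fun i : ℕ => Real.sin ((2 * i + 1) * x)) r]
    norm_num
  have hpos : 0 < |Real.sin x| := abs_pos.2 hs
  rw [le_div_iff₀ hpos]
  have h2 : |2 * Real.sin x * ∑ m ∈ Finset.Icc 1 r, Real.cos (2 * m * x)| ≤ 2 := by
    rw [key]
    have a1 := Real.sin_le_one ((2 * r + 1) * x)
    have a2 := Real.neg_one_le_sin ((2 * r + 1) * x)
    have b1 := Real.sin_le_one x
    have b2 := Real.neg_one_le_sin x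
    rw [abs_le]; constructor <;> linarith
  rw [abs_mul, abs_mul, abs_two] at h2
  nlinarith [abs_nonneg (∑ m ∈ Finset.Icc 1 r, Real.cos (2 * m * x))]

private lemma jordan_div (n k : ℕ) (h2 : 2 * k ≤ n) (hn : 0 < n) :
    2 * (k:ℝ) / n ≤ Real.sin (k * π / n) := by
  have hn' : (0:ℝ) < n := by exact_mod_cast hn
  have hk : (2:ℝ) * k ≤ n := by exact_mod_cast h2
  have h := Real.mul_le_sin (x := (k:ℝ) * π / n) (by positivity)
    (by rw [div_le_div_iff₀ hn' two_pos]; nlinarith [Real.pi_pos])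
  calc 2 * (k:ℝ) / n = 2 / π * ((k:ℝ) * π / n) := by
        field_simp
    _ ≤ _ := h

private lemma sin_lb (n j : ℕ) (hn : 2 ≤ n) (hj1 : 1 ≤ j) (hj2 : j ≤ n - 1) :
    2 * ((min j (n - j) : ℕ) : ℝ) / n ≤ Real.sin (j * π / n) := by
  rcases le_or_gt (2 * j) n with h | h
  · have hmin : min j (n - j) = j := min_eq_left (by omega)
    rw [hmin]
    exact jordan_div n j h (by omega)
  · have hmin : min j (n - j) = n - j := min_eq_right (by omega)
    have hsym : Real.sin ((j:ℝ) * π / n) = Real.sin (((n - j : ℕ):ℝ) * π / n) := by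
      rw [Nat.cast_sub (by omega),
        show ((n:ℝ) - j) * π / n = π - (j:ℝ) * π / n by
          field_simp,
        Real.sin_pi_sub]
    rw [hmin, hsym]
    exact jordan_div n (n - j) (by omega) (by omega)

private lemma sin_pos' (n j : ℕ) (hn : 2 ≤ n) (hj1 : 1 ≤ j) (hj2 : j ≤ n - 1) :
    0 < Real.sin ((j:ℝ) * π / n) := by
  have hn' : (0:ℝ) < n := by positivity
  have hj1' : (1:ℝ) ≤ j := by exact_mod_cast hj1
  have hjn : (j:ℝ) < n := by exact_mod_cast (by omega : j < n)
  apply Real.sin_pos_of_pos_of_lt_pi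
  · have := Real.pi_pos; positivity
  · rw [div_lt_iff₀ hn']
    nlinarith [Real.pi_pos]

private lemma harm_sum (n : ℕ) (hn : 2 ≤ n) :
    ∑ j ∈ Finset.Icc 1 (n - 1), ((j:ℝ))⁻¹ ≤ 1 + Real.log n := by
  have h := harmonic_le_one_add_log (n - 1)
  rw [harmonic_eq_sum_Icc] at h
  push_cast at h
  calc ∑ j ∈ Finset.Icc 1 (n - 1), ((j:ℝ))⁻¹ ≤ 1 + Real.log (↑(n - 1)) := h
    _ ≤ 1 + Real.log n := by
        gcongr
        · have : (1:ℝ) ≤ (↑(n-1):ℝ) := by exact_mod_cast (by omega : 1 ≤ n - 1)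
          linarith
        · exact_mod_cast (by omega : n - 1 ≤ n)

private lemma sum_refl (n : ℕ) (f : ℕ → ℝ) :
    ∑ j ∈ Finset.Icc 1 (n - 1), f (n - j) = ∑ j ∈ Finset.Icc 1 (n - 1), f j := by
  refine Finset.sum_nbij' (i := fun j => n - j) (j := fun j => n - j) ?_ ?_ ?_ ?_ ?_
  · simp only [Finset.mem_Icc]; intro a ha; omega
  · simp only [Finset.mem_Icc]; intro a ha; omega
  · simp only [Finset.mem_Icc]; intro a ha; omega
  · simp only [Finset.mem_Icc]; intro a ha; omega
  · intro a ha; rfl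

private lemma abs_alpha_le_one (n r j : ℕ) (hr : 0 < r) : |alpha n r j| ≤ 1 := by
  have hr' : (0:ℝ) < r := by exact_mod_cast hr
  rw [alpha, abs_mul]
  have h1 : |(1:ℝ) / r| = 1 / r := abs_of_pos (by positivity)
  rw [h1]
  have h2 : |∑ m ∈ Finset.Icc 1 r, Real.cos (2 * j * m * π / n)| ≤ r := by
    calc |∑ m ∈ Finset.Icc 1 r, Real.cos (2 * j * m * π / n)|
        ≤ ∑ m ∈ Finset.Icc 1 r, |Real.cos (2 * j * m * π / n)| :=
          Finset.abs_sum_le_sum_abs _ _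
      _ ≤ ∑ m ∈ Finset.Icc 1 r, 1 := by
          exact Finset.sum_le_sum fun m _ => Real.abs_cos_le_one _
      _ = r := by simp
  calc 1 / (r:ℝ) * |∑ m ∈ Finset.Icc 1 r, Real.cos (2 * j * m * π / n)|
      ≤ 1 / (r:ℝ) * r := by gcongr
    _ = 1 := by field_simp

private lemma abs_alpha_le (n r j : ℕ) (hn : 2 ≤ n) (hr : 0 < r) (hj1 : 1 ≤ j)
    (hj2 : j ≤ n - 1) :
    |alpha n r j| ≤ 1 / (r * Real.sin ((j:ℝ) * π / n)) := by
  have hs := sin_pos' n j hn hj1 hj2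
  have hr' : (0:ℝ) < r := by exact_mod_cast hr
  have hcg : ∀ m ∈ Finset.Icc 1 r,
      Real.cos (2 * j * m * π / n) = Real.cos (2 * m * ((j:ℝ) * π / n)) := by
    intro m _
    congr 1
    ring
  rw [alpha, Finset.sum_congr rfl hcg, abs_mul,
    abs_of_pos (show (0:ℝ) < 1 / r by positivity)]
  have hd := dirichlet ((j:ℝ) * π / n) (ne_of_gt hs) r
  rw [abs_of_pos hs] at hd
  calc 1 / (r:ℝ) * |∑ m ∈ Finset.Icc 1 r, Real.cos (2 * m * ((j:ℝ) * π / n))|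
      ≤ 1 / (r:ℝ) * (1 / Real.sin ((j:ℝ) * π / n)) := by gcongr
    _ = 1 / (r * Real.sin ((j:ℝ) * π / n)) := by
        rw [div_mul_div_comm, one_mul]

set_option maxHeartbeats 1000000 in
/-- **Lemma (sums of eigenvalues).** There is a constant `C > 0` such that, for every
`n ≥ 2` with `0 < 2 r_n < n`, one has `∑_{j=1}^n |α^n_j| ≤ C n ln n / r_n` and
`∑_{j=1+⌊n/r_n⌋}^{n−⌊n/r_n⌋−1} |1/β^n_j − 1| ≤ C n ln n / r_n`. -/
theorem eigenvalue_sum_bounds (r : ℕ → ℕ) :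
    ∃ C : ℝ, 0 < C ∧ ∀ n : ℕ, 2 ≤ n → 0 < 2 * r n → 2 * r n < n →
      (∑ j ∈ Finset.Icc 1 n, |alpha n (r n) j|
          ≤ C * n * Real.log n / r n) ∧
      (∑ j ∈ Finset.Icc (1 + n / r n) (n - n / r n - 1), |1 / beta n (r n) j - 1|
          ≤ C * n * Real.log n / r n) := by
  refine ⟨100, by norm_num, fun n hn hr1 hr2 => ?_⟩
  set R := r n with hRdef
  have hR : 0 < R := by omega
  have hR' : (0:ℝ) < R := by exact_mod_cast hR
  have hn' : (2:ℝ) ≤ n := by exact_mod_cast hn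
  have hn0 : (0:ℝ) < n := by linarith
  have hRA : 2 * (R:ℝ) < n := by exact_mod_cast hr2
  have hL : Real.log 2 ≤ Real.log n := by
    apply Real.log_le_log (by norm_num) hn'
  have hL2 : (0.6931471803 : ℝ) < Real.log 2 := Real.log_two_gt_d9
  have hLn : (0.69 : ℝ) ≤ Real.log n := by linarith
  -- the main sum bound over Icc 1 (n-1)
  have key : ∀ j ∈ Finset.Icc 1 (n - 1),
      |alpha n R j| ≤ (n:ℝ) / (2 * R) * (((j:ℕ):ℝ)⁻¹ + (((n - j : ℕ):ℕ):ℝ)⁻¹) := by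
    intro j hj
    rw [Finset.mem_Icc] at hj
    obtain ⟨hj1, hj2⟩ := hj
    have hs := sin_pos' n j hn hj1 hj2
    have hlb := sin_lb n j hn hj1 hj2
    have hm1 : 1 ≤ min j (n - j) := by omega
    have hm1' : (0:ℝ) < ((min j (n - j) : ℕ) : ℝ) := by exact_mod_cast hm1
    have step1 : |alpha n R j| ≤ 1 / (R * Real.sin ((j:ℝ) * π / n)) :=
      abs_alpha_le n R j hn hR hj1 hj2
    have step2 : 1 / ((R:ℝ) * Real.sin ((j:ℝ) * π / n))
        ≤ 1 / ((R:ℝ) * (2 * ((min j (n - j) : ℕ) : ℝ) / n)) := by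
      gcongr
    have step3 : 1 / ((R:ℝ) * (2 * ((min j (n - j) : ℕ) : ℝ) / n))
        = (n:ℝ) / (2 * R) * (((min j (n - j) : ℕ) : ℝ))⁻¹ := by
      field_simp
    have step4 : (((min j (n - j) : ℕ) : ℝ))⁻¹ ≤ ((j:ℝ))⁻¹ + (((n - j : ℕ):ℕ):ℝ)⁻¹ := by
      have hj' : (0:ℝ) < j := by exact_mod_cast hj1
      have hnj' : (0:ℝ) < ((n - j : ℕ) : ℝ) := by
        have : 1 ≤ n - j := by omega
        exact_mod_cast this
      rcases min_cases j (n - j) with ⟨hmeq, _⟩ | ⟨hmeq, _⟩ <;> rw [hmeq]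
      · have : (0:ℝ) ≤ (((n - j : ℕ):ℕ):ℝ)⁻¹ := by positivity
        linarith
      · have : (0:ℝ) ≤ ((j:ℝ))⁻¹ := by positivity
        linarith
    calc |alpha n R j| ≤ 1 / ((R:ℝ) * Real.sin ((j:ℝ) * π / n)) := step1
      _ ≤ 1 / ((R:ℝ) * (2 * ((min j (n - j) : ℕ) : ℝ) / n)) := step2
      _ = (n:ℝ) / (2 * R) * (((min j (n - j) : ℕ) : ℝ))⁻¹ := step3
      _ ≤ (n:ℝ) / (2 * R) * (((j:ℕ):ℝ)⁻¹ + (((n - j : ℕ):ℕ):ℝ)⁻¹) := by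
          have : (0:ℝ) ≤ (n:ℝ) / (2 * R) := by positivity
          exact mul_le_mul_of_nonneg_left step4 this
  have Hsum : ∑ j ∈ Finset.Icc 1 (n - 1), |alpha n R j|
      ≤ (n:ℝ) / R * (1 + Real.log n) := by
    calc ∑ j ∈ Finset.Icc 1 (n - 1), |alpha n R j|
        ≤ ∑ j ∈ Finset.Icc 1 (n - 1),
            (n:ℝ) / (2 * R) * (((j:ℕ):ℝ)⁻¹ + (((n - j : ℕ):ℕ):ℝ)⁻¹) :=
          Finset.sum_le_sum key
      _ = (n:ℝ) / (2 * R) * (∑ j ∈ Finset.Icc 1 (n - 1), ((j:ℝ))⁻¹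
            + ∑ j ∈ Finset.Icc 1 (n - 1), (((n - j : ℕ):ℕ):ℝ)⁻¹) := by
          rw [← Finset.mul_sum, Finset.sum_add_distrib]
      _ = (n:ℝ) / (2 * R) * (2 * ∑ j ∈ Finset.Icc 1 (n - 1), ((j:ℝ))⁻¹) := by
          rw [sum_refl n (fun k => ((k:ℕ):ℝ)⁻¹)]
          ring
      _ ≤ (n:ℝ) / (2 * R) * (2 * (1 + Real.log n)) := by
          have h := harm_sum n hn
          have : (0:ℝ) ≤ (n:ℝ) / (2 * R) := by positivity
          nlinarith
      _ = (n:ℝ) / R * (1 + Real.log n) := by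
          field_simp
  constructor
  · -- first sum
    have split : ∑ j ∈ Finset.Icc 1 n, |alpha n R j|
        = ∑ j ∈ Finset.Icc 1 (n - 1), |alpha n R j| + |alpha n R n| := by
      have h1 : Finset.Icc 1 n = Finset.Icc 1 ((n - 1) + 1) := by
        congr 1
        omega
      have h2 : |alpha n R (n - 1 + 1)| = |alpha n R n| := by
        rw [show n - 1 + 1 = n by omega]
      rw [h1, Finset.sum_Icc_succ_top (by omega : 1 ≤ n - 1 + 1), h2]
    rw [split]
    have hlast := abs_alpha_le_one n R n hR
    rw [le_div_iff₀ hR']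
    have hHB : (∑ j ∈ Finset.Icc 1 (n - 1), |alpha n R j|) * R ≤ (n:ℝ) * (1 + Real.log n) := by
      have := mul_le_mul_of_nonneg_right Hsum (le_of_lt hR')
      calc (∑ j ∈ Finset.Icc 1 (n - 1), |alpha n R j|) * R
          ≤ (n:ℝ) / R * (1 + Real.log n) * R := this
        _ = (n:ℝ) * (1 + Real.log n) := by field_simp
    have expand : (∑ j ∈ Finset.Icc 1 (n - 1), |alpha n R j| + |alpha n R n|) * R
        = (∑ j ∈ Finset.Icc 1 (n - 1), |alpha n R j|) * R + |alpha n R n| * R := by ring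
    rw [expand]
    have h3 : |alpha n R n| * R ≤ R := by nlinarith [abs_nonneg (alpha n R n)]
    have hRn : (R:ℝ) ≤ n / 2 := by linarith
    linarith [mul_le_mul_of_nonneg_left hLn (le_of_lt hn0), hHB, h3]
  · -- second sum
    have hq2' : 2 ≤ n / R := (Nat.le_div_iff_mul_le hR).2 (by omega)
    obtain ⟨q, hqdef⟩ : ∃ q, n / R = q := ⟨_, rfl⟩
    have hq2 : 2 ≤ q := hqdef ▸ hq2'
    rw [hRdef] at hqdef
    rw [hqdef]
    have hnq : (n:ℝ) < R * (q + 1) := by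
      have h1 := Nat.div_add_mod n R
      have h2 : n % R < R := Nat.mod_lt _ hR
      rw [hRdef, hqdef] at h1
      have h1' : (R:ℝ) * q + (n % R : ℕ) = n := by rw [hRdef]; exact_mod_cast h1
      have h2' : ((n % R : ℕ):ℝ) < R := by exact_mod_cast h2
      nlinarith
    have subs : Finset.Icc (1 + q) (n - q - 1) ⊆ Finset.Icc 1 (n - 1) :=
      Finset.Icc_subset_Icc (by omega) (by omega)
    have term : ∀ j ∈ Finset.Icc (1 + q) (n - q - 1),
        |1 / beta n R j - 1| ≤ 2 * |alpha n R j| := by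
      intro j hj
      rw [Finset.mem_Icc] at hj
      obtain ⟨hj1, hj2⟩ := hj
      have hj1' : 1 ≤ j := by omega
      have hj2' : j ≤ n - 1 := by omega
      have hs := sin_pos' n j hn hj1' hj2'
      have hlb := sin_lb n j hn hj1' hj2'
      have hmq : q + 1 ≤ min j (n - j) := by omega
      have hmq' : ((q:ℝ) + 1) ≤ ((min j (n - j) : ℕ) : ℝ) := by exact_mod_cast hmq
      have hRs : 2 < (R:ℝ) * Real.sin ((j:ℝ) * π / n) := by
        have c1 : (R:ℝ) * (2 * ((min j (n - j) : ℕ) : ℝ) / n)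
            ≤ (R:ℝ) * Real.sin ((j:ℝ) * π / n) := by
          apply mul_le_mul_of_nonneg_left hlb (le_of_lt hR')
        have c2 : 2 < (R:ℝ) * (2 * ((min j (n - j) : ℕ) : ℝ) / n) := by
          rw [show (R:ℝ) * (2 * ((min j (n - j) : ℕ) : ℝ) / n)
              = 2 * ((R:ℝ) * ((min j (n - j) : ℕ) : ℝ)) / n by ring,
            lt_div_iff₀ hn0]
          nlinarith [mul_le_mul_of_nonneg_left hmq' (le_of_lt hR')]
        linarith
      have habs : |alpha n R j| ≤ 1 / ((R:ℝ) * Real.sin ((j:ℝ) * π / n)) :=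
        abs_alpha_le n R j hn hR hj1' hj2'
      have half : |alpha n R j| ≤ 1 / 2 := by
        calc |alpha n R j| ≤ 1 / ((R:ℝ) * Real.sin ((j:ℝ) * π / n)) := habs
          _ ≤ 1 / 2 := by
              apply one_div_le_one_div_of_le two_pos (le_of_lt hRs)
      have hbeta : (1:ℝ) / 2 ≤ beta n R j := by
        rw [_root_.beta]
        have := abs_le.1 half
        linarith [this.2]
      have hbpos : (0:ℝ) < beta n R j := by linarith
      have hne : 1 - alpha n R j ≠ 0 := by
        rw [_root_.beta] at hbpos
        exact ne_of_gt hbpos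
      have heq : 1 / beta n R j - 1 = alpha n R j / beta n R j := by
        rw [_root_.beta]
        field_simp
        ring
      rw [heq, abs_div, abs_of_pos hbpos]
      rw [div_le_iff₀ hbpos]
      nlinarith [abs_nonneg (alpha n R j)]
    calc ∑ j ∈ Finset.Icc (1 + q) (n - q - 1), |1 / beta n R j - 1|
        ≤ ∑ j ∈ Finset.Icc (1 + q) (n - q - 1), 2 * |alpha n R j| :=
          Finset.sum_le_sum term
      _ ≤ ∑ j ∈ Finset.Icc 1 (n - 1), 2 * |alpha n R j| := by
          apply Finset.sum_le_sum_of_subset_of_nonneg subs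
          intro j _ _
          positivity
      _ = 2 * ∑ j ∈ Finset.Icc 1 (n - 1), |alpha n R j| := by
          rw [Finset.mul_sum]
      _ ≤ 2 * ((n:ℝ) / R * (1 + Real.log n)) := by linarith
      _ ≤ 100 * n * Real.log n / R := by
          rw [le_div_iff₀ hR']
          have hexp : 2 * ((n:ℝ) / R * (1 + Real.log n)) * R
              = 2 * n * (1 + Real.log n) := by
            field_simp
          rw [hexp]
          nlinarith [mul_le_mul_of_nonneg_left hLn (le_of_lt hn0)]

end
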